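/- arXiv:math/0012240 — 3 statements merged into one kernel-verified Lean document; each statement's English description precedes it below -/
import Mathlib

section
/- Let F be a field. The Milnor K-ring K^M_*(F) is graded anti-commutative: for every x ∈ K^M_m(F) and y ∈ K^M_n(F), one has x·y = (−1)^{mn} y·x in K^M_{m+n}(F). -/
noncomputable section

/-- The Steinberg relation on the tensor algebra of `Additive Fˣ`:
`ℓ(a)·ℓ(b) = 0` whenever `a + b = 1` in `F`. -/
inductive MilnorRel (F : Type) [Field F] :
    TensorAlgebra ℤ (Additive Fˣ) → TensorAlgebra ℤ (Additive Fˣ) → Prop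
  | steinberg (a b : Fˣ) (h : (a : F) + (b : F) = 1) :
      MilnorRel F (TensorAlgebra.ι ℤ (Additive.ofMul a) *
        TensorAlgebra.ι ℤ (Additive.ofMul b)) 0

/-- The Milnor K-ring `K^M_*(F)`: the quotient of the tensor algebra of the
`ℤ`-module `F^×` by the two-sided ideal generated by the Steinberg relations. -/
abbrev MilnorK (F : Type) [Field F] := RingQuot (MilnorRel F)

/-- The generator `ℓ(a) ∈ K^M_1(F) ⊆ K^M_*(F)` attached to `a ∈ F^×`. -/
def MilnorL (F : Type) [Field F] (a : Fˣ) : MilnorK F :=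
  RingQuot.mkRingHom (MilnorRel F) (TensorAlgebra.ι ℤ (Additive.ofMul a))

/-- The degree-`n` graded piece `K^M_n(F)`: the additive subgroup generated by
`n`-fold products `ℓ(a₁)⋯ℓ(aₙ)`. -/
def MilnorDeg (F : Type) [Field F] (n : ℕ) : AddSubgroup (MilnorK F) :=
  AddSubgroup.closure
    {x | ∃ a : Fin n → Fˣ, x = (List.ofFn fun i => MilnorL F (a i)).prod}

namespace MilnorAux

/-! ### Generic ring lemmas (proved in an arbitrary ring, where tactics behave) -/

private lemma neg_one_pow_comm {R : Type} [Ring R] (x : R) (k : ℕ) :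
    x * (-1 : R) ^ k = (-1 : R) ^ k * x :=
  ((Commute.neg_one_right x).pow_right k).eq

private lemma neg_neg_one_pow {R : Type} [Ring R] (k : ℕ) (z : R) :
    -((-1 : R) ^ k * z) = (-1 : R) ^ (k + 1) * z := by
  rw [pow_succ, mul_assoc, neg_one_mul, mul_neg]

private lemma cancel_left {R : Type} [Ring R] (p q v : R)
    (hpq : p + q = 0) (h : p * v = 0) : q * v = 0 := by
  have hq : q = -p := eq_neg_of_add_eq_zero_right hpq
  rw [hq, neg_mul, h, neg_zero]

private lemma final_aux {R : Type} [Ring R] (a u v vi : R)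
    (hvi : v + vi = 0) (h1 : a * u = 0) (h2 : a * v = 0) : a * (u + vi) = 0 := by
  have hv : vi = -v := eq_neg_of_add_eq_zero_right hvi
  rw [hv, mul_add, h1, mul_neg, h2, neg_zero, add_zero]

private lemma ring_anticomm_aux {R : Type} [Ring R] (A B C : R)
    (ha : A * (A + C) = 0) (hb : B * (B + C) = 0)
    (hab : (A + B) * (A + B + C) = 0) : A * B = -(B * A) := by
  have key : A * B + B * A = 0 := by
    have e : A * B + B * A = (A + B) * (A + B + C) - A * (A + C) - B * (B + C) := by
      noncomm_ring
    rw [e, ha, hb, hab, sub_zero, sub_zero]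
  exact eq_neg_of_add_eq_zero_left key

private lemma single_swap {R : Type} [Ring R] (a : R) :
    ∀ L : List R, (∀ b ∈ L, a * b = -(b * a)) →
      a * L.prod = (-1 : R) ^ L.length * (L.prod * a)
  | [], _ => by simp
  | b :: t, h => by
    have hb := h b List.mem_cons_self
    have ih := single_swap a t (fun c hc => h c (List.mem_cons_of_mem _ hc))
    rw [List.prod_cons, List.length_cons, ← mul_assoc, hb, neg_mul, mul_assoc, ih,
      ← mul_assoc b, neg_one_pow_comm, mul_assoc, neg_neg_one_pow, ← mul_assoc b,
      ← mul_assoc]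

private lemma lists_swap {R : Type} [Ring R] :
    ∀ L M : List R, (∀ a ∈ L, ∀ b ∈ M, a * b = -(b * a)) →
      L.prod * M.prod = (-1 : R) ^ (L.length * M.length) * (M.prod * L.prod)
  | [], M, _ => by simp
  | a :: t, M, h => by
    have hs := single_swap a M (h a List.mem_cons_self)
    have ih := lists_swap t M (fun c hc => h c (List.mem_cons_of_mem _ hc))
    rw [List.prod_cons, List.length_cons, mul_assoc, ih, ← mul_assoc a,
      neg_one_pow_comm, mul_assoc, ← mul_assoc a, hs, mul_assoc, ← mul_assoc,
      ← pow_add, add_one_mul, pow_add, mul_assoc, mul_assoc, ← pow_add,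
      ← mul_assoc, ← pow_add]

private lemma closure_swap {R : Type} [Ring R] (c : R) (S T : Set R)
    (h : ∀ x ∈ S, ∀ y ∈ T, x * y = c * (y * x)) :
    ∀ x ∈ AddSubgroup.closure S, ∀ y ∈ AddSubgroup.closure T, x * y = c * (y * x) := by
  have step : ∀ y ∈ T, ∀ x ∈ AddSubgroup.closure S, x * y = c * (y * x) := by
    intro y hy x hx
    induction hx using AddSubgroup.closure_induction with
    | mem z hz => exact h z hz y hy
    | zero => simp
    | add u v hu hv ihu ihv => rw [add_mul, ihu, ihv, ← mul_add, ← mul_add]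
    | neg u hu ihu => rw [neg_mul, ihu, mul_neg, mul_neg]
  intro x hx y hy
  induction hy using AddSubgroup.closure_induction with
  | mem z hz => exact step z hz x hx
  | zero => simp
  | add u v hu hv ihu ihv => rw [mul_add, ihu, ihv, ← mul_add, add_mul]
  | neg u hu ihu => rw [mul_neg, ihu, neg_mul, mul_neg]

private lemma zsmul_neg_one_pow {R : Type} [Ring R] (k : ℕ) (z : R) :
    ((-1 : ℤ) ^ k) • z = (-1 : R) ^ k * z := by
  rw [zsmul_eq_mul, Int.cast_pow, Int.cast_neg, Int.cast_one]

/-! ### Milnor K-theory specific lemmas -/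

variable {F : Type} [Field F]

lemma L_mul (a b : Fˣ) : MilnorL F (a * b) = MilnorL F a + MilnorL F b := by
  unfold MilnorL
  rw [← map_add]
  congr 1
  exact map_add (TensorAlgebra.ι ℤ) (Additive.ofMul a) (Additive.ofMul b)

lemma L_one : MilnorL F (1 : Fˣ) = 0 := by
  have := L_mul (F := F) 1 1
  simpa using this.symm

lemma L_inv' (a : Fˣ) : MilnorL F a + MilnorL F a⁻¹ = 0 := by
  rw [← L_mul, mul_inv_cancel]
  exact L_one

lemma steinberg' (a b : Fˣ) (h : (a : F) + (b : F) = 1) :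
    MilnorL F a * MilnorL F b = 0 := by
  have := RingQuot.mkRingHom_rel (MilnorRel.steinberg a b h)
  simpa [MilnorL, map_mul] using this

lemma L_neg_self (a : Fˣ) : MilnorL F a * MilnorL F (-a) = 0 := by
  by_cases h1 : a = 1
  · subst h1
    rw [L_one, zero_mul]
  · have ha : (a : F) ≠ 1 := fun h => h1 (Units.ext h)
    have hu : (1 : F) - (a : F) ≠ 0 := sub_ne_zero.mpr (Ne.symm ha)
    have hainv : ((a⁻¹ : Fˣ) : F) = (a : F)⁻¹ := Units.val_inv_eq_inv_val a
    have hane : (a : F) ≠ 0 := a.ne_zero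
    have hv : (1 : F) - ((a⁻¹ : Fˣ) : F) ≠ 0 := by
      rw [hainv]
      refine sub_ne_zero.mpr (Ne.symm fun h => ha (inv_eq_one.mp h))
    set u : Fˣ := Units.mk0 _ hu with hu_def
    set v : Fˣ := Units.mk0 _ hv with hv_def
    have key : (-a : Fˣ) = u * v⁻¹ := by
      apply Units.ext
      rw [Units.val_mul, Units.val_inv_eq_inv_val, hu_def, hv_def]
      simp only [Units.val_mk0, Units.val_neg]
      rw [eq_comm, mul_inv_eq_iff_eq_mul₀ (by rwa [hainv] at hv)]
      field_simp
      simp only [hainv, mul_inv_cancel₀ hane, inv_mul_cancel₀ hane]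
      linear_combination -(mul_inv_cancel₀ hane)
    have hst1 : MilnorL F a * MilnorL F u = 0 := by
      apply steinberg'
      simp [hu_def]
    have hst2 : MilnorL F a⁻¹ * MilnorL F v = 0 := by
      apply steinberg'
      simp [hv_def]
    have hainv' : MilnorL F a⁻¹ + MilnorL F a = 0 := by
      rw [add_comm]; exact L_inv' a
    have hav : MilnorL F a * MilnorL F v = 0 := by
      have := cancel_left (MilnorL F a⁻¹) (MilnorL F a) (MilnorL F v) hainv' hst2
      exact this
    have expand : MilnorL F (-a) = MilnorL F u + MilnorL F v⁻¹ := by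
      rw [key, L_mul]
    rw [expand]
    exact final_aux _ _ _ _ (L_inv' v) hst1 hav

lemma anticomm (a b : Fˣ) :
    MilnorL F a * MilnorL F b = -(MilnorL F b * MilnorL F a) := by
  have e : ∀ c : Fˣ, MilnorL F (-c) = MilnorL F c + MilnorL F (-1) := by
    intro c
    rw [show (-c : Fˣ) = c * (-1) by simp, L_mul]
  have ha := L_neg_self (F := F) a
  have hb := L_neg_self (F := F) b
  have hab := L_neg_self (F := F) (a * b)
  rw [e] at ha hb hab
  rw [L_mul] at hab
  exact ring_anticomm_aux (MilnorL F a) (MilnorL F b) (MilnorL F (-1)) ha hb hab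

end MilnorAux

/-- The Milnor K-ring is graded anti-commutative: for `x ∈ K^M_m(F)` and
`y ∈ K^M_n(F)`, one has `x·y = (−1)^{mn}·(y·x)`. -/
theorem stmt_3 (F : Type) [Field F] (m n : ℕ) (x y : MilnorK F)
    (hx : x ∈ MilnorDeg F m) (hy : y ∈ MilnorDeg F n) :
    x * y = ((-1 : ℤ) ^ (m * n)) • (y * x) := by
  have main : x * y = (-1 : MilnorK F) ^ (m * n) * (y * x) := by
    refine MilnorAux.closure_swap _ _ _ ?_ x hx y hy
    rintro x' ⟨a, rfl⟩ y' ⟨b, rfl⟩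
    have hLa : (List.ofFn fun i => MilnorL F (a i)) = (List.ofFn a).map (MilnorL F) :=
      by rw [List.map_ofFn]; rfl
    have hLb : (List.ofFn fun i => MilnorL F (b i)) = (List.ofFn b).map (MilnorL F) :=
      by rw [List.map_ofFn]; rfl
    rw [hLa, hLb]
    have := MilnorAux.lists_swap ((List.ofFn a).map (MilnorL F))
      ((List.ofFn b).map (MilnorL F)) ?_
    · simpa using this
    · rintro u hu v hv
      rw [List.mem_map] at hu hv
      obtain ⟨p, -, rfl⟩ := hu
      obtain ⟨q, -, rfl⟩ := hv
      exact MilnorAux.anticomm p q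
  rw [main]
  exact (MilnorAux.zsmul_neg_one_pow (m * n) (y * x)).symm
end
end

section
/- Let F be a field and n ≥ 2. If a₁, …, aₙ ∈ F^× satisfy a₁ + ⋯ + aₙ = 1 or a₁ + ⋯ + aₙ = 0, then ℓ(a₁)·ℓ(a₂)⋯ℓ(aₙ) = 0 in K^M_n(F). (Relation R₅ of Proposition 1.0.) -/
noncomputable section

variable (F : Type) [Field F]

lemma MilnorL_mul (a b : Fˣ) : MilnorL F (a * b) = MilnorL F a + MilnorL F b := by
  unfold MilnorL
  rw [show Additive.ofMul (a * b) = Additive.ofMul a + Additive.ofMul b from rfl, map_add,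
    map_add]

lemma MilnorL_one : MilnorL F 1 = 0 := by
  unfold MilnorL
  rw [show Additive.ofMul (1 : Fˣ) = 0 from rfl, map_zero, map_zero]

lemma MilnorL_add_inv (a : Fˣ) : MilnorL F a + MilnorL F a⁻¹ = 0 := by
  rw [← MilnorL_mul, mul_inv_cancel, MilnorL_one]

lemma MilnorL_steinberg (a b : Fˣ) (h : (a : F) + (b : F) = 1) :
    MilnorL F a * MilnorL F b = 0 := by
  have := RingQuot.mkRingHom_rel (MilnorRel.steinberg a b h)
  simpa [MilnorL, map_mul, map_zero] using this

lemma MilnorL_inv_right (a b : Fˣ) (h : MilnorL F a * MilnorL F b = 0) :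
    MilnorL F a * MilnorL F b⁻¹ = 0 := by
  have h2 : MilnorL F a * MilnorL F b + MilnorL F a * MilnorL F b⁻¹ = 0 := by
    calc MilnorL F a * MilnorL F b + MilnorL F a * MilnorL F b⁻¹
        = MilnorL F a * (MilnorL F b + MilnorL F b⁻¹) := by noncomm_ring
      _ = MilnorL F a * 0 := by rw [MilnorL_add_inv]
      _ = 0 := mul_zero _
  rw [h, zero_add] at h2
  exact h2

lemma MilnorL_inv_left (a b : Fˣ) (h : MilnorL F a * MilnorL F b = 0) :
    MilnorL F a⁻¹ * MilnorL F b = 0 := by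
  have h2 : MilnorL F a * MilnorL F b + MilnorL F a⁻¹ * MilnorL F b = 0 := by
    calc MilnorL F a * MilnorL F b + MilnorL F a⁻¹ * MilnorL F b
        = (MilnorL F a + MilnorL F a⁻¹) * MilnorL F b := by noncomm_ring
      _ = 0 * MilnorL F b := by rw [MilnorL_add_inv]
      _ = 0 := zero_mul _
  rw [h, zero_add] at h2
  exact h2

lemma MilnorL_neg_self (a : Fˣ) : MilnorL F a * MilnorL F (-a) = 0 := by
  by_cases ha : a = 1
  · subst ha; rw [MilnorL_one, zero_mul]
  · have ha' : (a : F) ≠ 1 := fun h => ha (Units.ext (by simpa using h))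
    have h1 : (1 : F) - (a : F) ≠ 0 := sub_ne_zero.mpr ha'.symm
    have ha0 : (a : F) ≠ 0 := a.ne_zero
    have h2 : (1 : F) - (a : F)⁻¹ ≠ 0 := by
      rw [sub_ne_zero]
      intro hc
      apply ha'
      field_simp at hc
      simp [hc]
    set u : Fˣ := Units.mk0 _ h1 with hu
    set v : Fˣ := Units.mk0 _ h2 with hv
    have huv : -a = u * v⁻¹ := by
      ext
      simp only [Units.val_neg, Units.val_mul, hu, hv]
      rw [Units.val_inv_eq_inv_val]
      simp only [Units.val_mk0]
      rw [eq_comm, mul_inv_eq_iff_eq_mul₀ h2, mul_sub, mul_one, neg_mul, mul_inv_cancel₀ ha0]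
      ring
    have hs1 : MilnorL F a * MilnorL F u = 0 := by
      apply MilnorL_steinberg
      simp [hu]
    have hs2 : MilnorL F a⁻¹ * MilnorL F v = 0 := by
      apply MilnorL_steinberg
      rw [hv]
      simp [Units.val_inv_eq_inv_val]
    have hs3 : MilnorL F a * MilnorL F v⁻¹ = 0 := by
      apply MilnorL_inv_right
      have := MilnorL_inv_left F a⁻¹ v hs2
      rwa [inv_inv] at this
    rw [huv, MilnorL_mul]
    calc MilnorL F a * (MilnorL F u + MilnorL F v⁻¹)
        = MilnorL F a * MilnorL F u + MilnorL F a * MilnorL F v⁻¹ := by noncomm_ring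
      _ = 0 := by rw [hs1, hs3, add_zero]

lemma MilnorL_anticomm (a b : Fˣ) :
    MilnorL F a * MilnorL F b + MilnorL F b * MilnorL F a = 0 := by
  have hab := MilnorL_neg_self F (a * b)
  have e1 : MilnorL F (-(a * b)) = MilnorL F (-1) + MilnorL F a + MilnorL F b := by
    rw [show (-(a * b) : Fˣ) = (-1) * a * b by rw [neg_one_mul, neg_mul], MilnorL_mul,
      MilnorL_mul]
  have e2 : MilnorL F (-a) = MilnorL F (-1) + MilnorL F a := by
    rw [show (-a : Fˣ) = (-1) * a from (neg_one_mul a).symm, MilnorL_mul]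
  have e3 : MilnorL F (-b) = MilnorL F (-1) + MilnorL F b := by
    rw [show (-b : Fˣ) = (-1) * b from (neg_one_mul b).symm, MilnorL_mul]
  have ha := MilnorL_neg_self F a
  have hb := MilnorL_neg_self F b
  rw [e2] at ha
  rw [e3] at hb
  rw [MilnorL_mul, e1] at hab
  have expand : (MilnorL F a + MilnorL F b) *
      (MilnorL F (-1) + MilnorL F a + MilnorL F b) =
      MilnorL F a * (MilnorL F (-1) + MilnorL F a) +
      (MilnorL F a * MilnorL F b + MilnorL F b * MilnorL F a) +
      MilnorL F b * (MilnorL F (-1) + MilnorL F b) := by noncomm_ring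
  rw [expand, ha, hb, zero_add, add_zero] at hab
  exact hab

lemma MilnorL_sum_zero (a b : Fˣ) (h : (a : F) + (b : F) = 0) :
    MilnorL F a * MilnorL F b = 0 := by
  have : b = -a := Units.ext (by push_cast; linear_combination h)
  rw [this]
  exact MilnorL_neg_self F a

lemma MilnorL_key (t : List Fˣ) : ∀ (a b : Fˣ),
    ((a : F) + (b : F) + (t.map (Units.val : Fˣ → F)).sum = 1 ∨
      (a : F) + (b : F) + (t.map (Units.val : Fˣ → F)).sum = 0) →
    MilnorL F a * MilnorL F b * (t.map (MilnorL F)).prod = 0 := by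
  induction t with
  | nil =>
    intro a b h
    simp only [List.map_nil, List.sum_nil, add_zero] at h
    simp only [List.map_nil, List.prod_nil, mul_one]
    rcases h with h | h
    · exact MilnorL_steinberg F a b h
    · exact MilnorL_sum_zero F a b h
  | cons c t' ih =>
    intro a b h
    by_cases hs : (a : F) + (b : F) = 0
    · rw [MilnorL_sum_zero F a b hs]
      exact zero_mul _
    · set s : Fˣ := Units.mk0 _ hs with hs_def
      have hvs : (s : F) = (a : F) + (b : F) := rfl
      set Q := ((c :: t').map (MilnorL F)).prod with hQ
      have hsQ : MilnorL F s * Q = 0 := by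
        have hsum : ((s : F) + (c : F) + (t'.map (Units.val : Fˣ → F)).sum = 1 ∨
            (s : F) + (c : F) + (t'.map (Units.val : Fˣ → F)).sum = 0) := by
          simp only [List.map_cons, List.sum_cons] at h
          rcases h with h | h
          · left; rw [hvs, ← h]; ring
          · right; rw [hvs, ← h]; ring
        have hkey := ih s c hsum
        rw [hQ]
        simp only [List.map_cons, List.prod_cons]
        rw [← mul_assoc]
        exact hkey
      set w := MilnorL F s⁻¹ with hw
      have hwQ : w * Q = 0 := by
        have h1 : MilnorL F s + w = 0 := MilnorL_add_inv F s
        have h2 : MilnorL F s * Q + w * Q = 0 := by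
          calc MilnorL F s * Q + w * Q = (MilnorL F s + w) * Q := by noncomm_ring
            _ = 0 * Q := by rw [h1]
            _ = 0 := zero_mul _
        rw [hsQ, zero_add] at h2
        exact h2
      have hst : MilnorL F a * MilnorL F b +
          (MilnorL F a * w + w * MilnorL F b + w * w) = 0 := by
        have hcoe : ((a * s⁻¹ : Fˣ) : F) + ((b * s⁻¹ : Fˣ) : F) = 1 := by
          push_cast
          rw [hvs]
          rw [← add_mul, mul_inv_cancel₀ hs]
        have h0 := MilnorL_steinberg F (a * s⁻¹) (b * s⁻¹) hcoe
        rw [MilnorL_mul, MilnorL_mul] at h0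
        calc MilnorL F a * MilnorL F b + (MilnorL F a * w + w * MilnorL F b + w * w)
            = (MilnorL F a + w) * (MilnorL F b + w) := by rw [hw]; noncomm_ring
          _ = 0 := h0
      have hbwQ : w * MilnorL F b * Q = 0 := by
        have h1 : w * MilnorL F b + MilnorL F b * w = 0 := MilnorL_anticomm F s⁻¹ b
        have h2 : w * MilnorL F b * Q + MilnorL F b * (w * Q) = 0 := by
          calc w * MilnorL F b * Q + MilnorL F b * (w * Q)
              = (w * MilnorL F b + MilnorL F b * w) * Q := by noncomm_ring
            _ = 0 * Q := by rw [h1]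
            _ = 0 := zero_mul _
        rw [hwQ, mul_zero, add_zero] at h2
        exact h2
      have hfin : MilnorL F a * MilnorL F b * Q +
          (MilnorL F a * (w * Q) + w * MilnorL F b * Q + w * (w * Q)) = 0 := by
        calc MilnorL F a * MilnorL F b * Q +
            (MilnorL F a * (w * Q) + w * MilnorL F b * Q + w * (w * Q))
            = (MilnorL F a * MilnorL F b + (MilnorL F a * w + w * MilnorL F b + w * w)) * Q := by
              noncomm_ring
          _ = 0 * Q := by rw [hst]
          _ = 0 := zero_mul _
      rw [hwQ, mul_zero, hbwQ, mul_zero, add_zero, add_zero, add_zero] at hfin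
      exact hfin


/-- Relation `R₅` of Proposition 1.0: if `a₁ + ⋯ + aₙ = 1` or `a₁ + ⋯ + aₙ = 0`
with `n ≥ 2`, then `ℓ(a₁)·ℓ(a₂)⋯ℓ(aₙ) = 0` in `K^M_n(F)`. -/
theorem stmt_4 (F : Type) [Field F] (n : ℕ) (hn : 2 ≤ n) (a : Fin n → Fˣ)
    (h : (∑ i, (a i : F)) = 1 ∨ (∑ i, (a i : F)) = 0) :
    (List.ofFn fun i => MilnorL F (a i)).prod = 0 := by
  obtain ⟨m, rfl⟩ : ∃ m, n = m + 2 := ⟨n - 2, by omega⟩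
  have hk := MilnorL_key F (List.ofFn fun i : Fin m => a i.succ.succ) (a 0) (a 1) ?_
  · rw [List.map_ofFn] at hk
    rw [List.ofFn_succ, List.ofFn_succ, List.prod_cons, List.prod_cons, ← mul_assoc]
    convert hk using 2
    · simp [Fin.succ_zero_eq_one]
    · rfl
  · rw [List.map_ofFn, List.sum_ofFn]
    simpa [Fin.sum_univ_succ, add_assoc] using h
end
end

section
/- Let F be a field equipped with a surjective discrete valuation ν : F^× → ℤ with residue field k(ν). Write ∂_π(x) = ∂_π⁰(x) + ∂_ν(x)·Π with ∂_π⁰(x), ∂_ν(x) ∈ K^M_*(k(ν)) (this is well defined since (K^M_*(k(ν)))(Π) is a free left module on {1, Π}). Then the map ∂_ν : K^M_m(F) → K^M_{m−1}(k(ν)) is independent of the choice of uniformizer π: if π and π′ are two elements with ν(π) = ν(π′) = 1, then the Π-components of ∂_π(x) and ∂_{π′}(x) agree for all x ∈ K^M_*(F). -/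
noncomputable section

/-- Auxiliary map for the grading-sign automorphism: the algebra map on the
tensor algebra sending `ℓ(a)` to `−ℓ(a)`. -/
def MilnorSigmaAux (k : Type) [Field k] :
    TensorAlgebra ℤ (Additive kˣ) →ₐ[ℤ] MilnorK k :=
  TensorAlgebra.lift ℤ
    ((RingQuot.mkAlgHom ℤ (MilnorRel k)).toLinearMap ∘ₗ
      (TensorAlgebra.ι ℤ) ∘ₗ (-LinearMap.id))

lemma MilnorSigmaAux_ι (k : Type) [Field k] (x : Additive kˣ) :
    MilnorSigmaAux k (TensorAlgebra.ι ℤ x) =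
      -(RingQuot.mkAlgHom ℤ (MilnorRel k) (TensorAlgebra.ι ℤ x)) := by
  simp [MilnorSigmaAux]

/-- The grading-sign ring automorphism `σ` of `K^M_*(k)`, acting by `(−1)^n` on
the degree-`n` piece; it is induced by `ℓ(a) ↦ −ℓ(a)`. -/
def MilnorSigma (k : Type) [Field k] : MilnorK k →ₐ[ℤ] MilnorK k :=
  RingQuot.liftAlgHom ℤ ⟨MilnorSigmaAux k, by
    rintro x y ⟨a, b, h⟩
    rw [map_zero, map_mul, MilnorSigmaAux_ι, MilnorSigmaAux_ι]
    have : ∀ A B : MilnorK k, -A * -B = A * B := fun A B => neg_mul_neg A B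
    rw [this, ← map_mul,
      RingQuot.mkAlgHom_rel ℤ (MilnorRel.steinberg a b h), map_zero]⟩

/-- The element `ε = ℓ(−1)`. -/
def MilnorEps (k : Type) [Field k] : MilnorK k := MilnorL k (-1)

/-- The multiplication on `(K^M_*(k))(Π) = K^M_*(k) ⊕ K^M_*(k)·Π`, the free left
module on basis `{1, Π}`, determined by `Π² = ℓ(−1)·Π` and `Π·a = σ(a)·Π`
(i.e. `Π·a = (−1)^n·a·Π` for `a` homogeneous of degree `n`):
`(a + bΠ)(c + dΠ) = ac + (ad + b·σ(c) + b·σ(d)·ε)Π`. -/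
def APiMul (k : Type) [Field k] (x y : MilnorK k × MilnorK k) :
    MilnorK k × MilnorK k :=
  (x.1 * y.1,
    x.1 * y.2 + x.2 * MilnorSigma k y.1 + x.2 * MilnorSigma k y.2 * MilnorEps k)

/-- The degree-`n` piece of the `Π`-component of `(K^M_*(k))(Π)`; in degree `n`
one has `(K^M(k))(Π)_n = K^M_n(k) ⊕ K^M_{n−1}(k)·Π`. -/
def MilnorDegShift (k : Type) [Field k] : ℕ → AddSubgroup (MilnorK k)
  | 0 => ⊥
  | n + 1 => MilnorDeg k n

section DVR

variable (O : Type) [CommRing O] [IsDomain O] [IsDiscreteValuationRing O]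
variable (F : Type) [Field F] [Algebra O F] [IsFractionRing O F]

/-- The residue field `k(ν)` of the valuation. -/
abbrev ResField := IsLocalRing.ResidueField O

/-- The residue class `ū ∈ k(ν)^×` of a unit `u ∈ O^×`. -/
def resUnit (u : Oˣ) : (ResField O)ˣ :=
  Units.map (IsLocalRing.residue O).toMonoidHom u

/-- The element `u·π^i ∈ F^×`, for `u ∈ O^×` a unit, `π` a uniformizer and `i ∈ ℤ`. -/
def unitPiPow (u : Oˣ) (π : O) (hπ : Irreducible π) (i : ℤ) : Fˣ :=
  Units.map (algebraMap O F).toMonoidHom u *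
    (Units.mk0 (algebraMap O F π)
      (by
        simpa [map_eq_zero_iff (algebraMap O F) (IsFractionRing.injective O F)]
          using hπ.ne_zero)) ^ i

/-- `∂` is the boundary map `∂_π : K^M_*(F) → (K^M_*(k(ν)))(Π)` attached to the
uniformizer `π`: a graded ring homomorphism (with `(K^M(k))(Π)` carrying the
multiplication `APiMul`, and `(K^M(k))(Π)ₙ = K^Mₙ ⊕ K^M_{n-1}·Π`) satisfying
`∂_π(ℓ(u·π^i)) = ℓ(ū) + i·Π`. -/
structure IsDpi (π : O) (hπ : Irreducible π)
    (d : MilnorK F → MilnorK (ResField O) × MilnorK (ResField O)) : Prop where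
  map_one : d 1 = (1, 0)
  map_add : ∀ x y, d (x + y) = d x + d y
  map_mul : ∀ x y, d (x * y) = APiMul (ResField O) (d x) (d y)
  graded : ∀ (n : ℕ) (x : MilnorK F), x ∈ MilnorDeg F n →
    (d x).1 ∈ MilnorDeg (ResField O) n ∧ (d x).2 ∈ MilnorDegShift (ResField O) n
  map_l : ∀ (u : Oˣ) (i : ℤ),
    d (MilnorL F (unitPiPow O F u π hπ i)) =
      (MilnorL (ResField O) (resUnit O u), (i : MilnorK (ResField O)))

end DVR

section MilnorLemmas

variable (k : Type) [Field k]

lemma milnorL_mul (a b : kˣ) : MilnorL k (a * b) = MilnorL k a + MilnorL k b := by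
  have h : (Additive.ofMul (a * b)) = Additive.ofMul a + Additive.ofMul b := rfl
  simp only [MilnorL, h, map_add]

lemma milnorL_one : MilnorL k 1 = 0 := by
  have h := milnorL_mul k 1 1
  rw [mul_one] at h
  exact left_eq_add.mp h

lemma milnorL_inv (a : kˣ) : MilnorL k a⁻¹ = - MilnorL k a := by
  have h := milnorL_mul k a a⁻¹
  rw [mul_inv_cancel, milnorL_one] at h
  exact (neg_eq_of_add_eq_zero_right h.symm).symm

lemma milnorL_zpow (a : kˣ) (i : ℤ) : MilnorL k (a ^ i) = i • MilnorL k a := by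
  have h : (Additive.ofMul (a ^ i)) = i • Additive.ofMul a := by
    simp [ofMul_zpow]
  simp only [MilnorL, h, map_zsmul]

lemma milnorL_steinberg (a b : kˣ) (h : (a : k) + (b : k) = 1) :
    MilnorL k a * MilnorL k b = 0 := by
  simp only [MilnorL]
  rw [← map_mul, RingQuot.mkRingHom_rel (MilnorRel.steinberg a b h), map_zero]

lemma milnorL_mul_neg_self (a : kˣ) : MilnorL k a * MilnorL k (-a) = 0 := by
  by_cases ha : a = 1
  · rw [ha, milnorL_one, zero_mul]
  · have haF : (a : k) ≠ 1 := fun h => ha (Units.ext h)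
    have h1 : (1 : k) - (a : k) ≠ 0 := sub_ne_zero.mpr (Ne.symm haF)
    have hainv : ((a : k))⁻¹ ≠ 1 := by
      intro h
      exact haF (by rw [← inv_inv (a : k), h, inv_one])
    have h2 : (1 : k) - ((a : k))⁻¹ ≠ 0 := sub_ne_zero.mpr (Ne.symm hainv)
    set b : kˣ := Units.mk0 _ h1 with hb
    set b' : kˣ := Units.mk0 _ h2 with hb'
    have key : -a = b * b'⁻¹ := by
      apply Units.ext
      have ha0 : (a : k) ≠ 0 := a.ne_zero
      simp only [hb, hb', Units.val_mul, Units.val_inv_eq_inv_val, Units.val_mk0,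
        Units.val_neg]
      rw [← div_eq_mul_inv, eq_div_iff h2]
      field_simp
      ring
    have s1 : MilnorL k a * MilnorL k b = 0 :=
      milnorL_steinberg k a b (by simp [hb])
    have s2 : MilnorL k a * MilnorL k b' = 0 := by
      have h := milnorL_steinberg k a⁻¹ b' (by simp [hb'])
      rw [milnorL_inv, neg_mul (MilnorL k a) (MilnorL k b'), neg_eq_zero] at h
      exact h
    rw [key, milnorL_mul, milnorL_inv]
    rw [mul_add, mul_neg (MilnorL k a) (MilnorL k b'), s1, s2, neg_zero, add_zero]

lemma milnorL_anticomm (a b : kˣ) :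
    MilnorL k a * MilnorL k b + MilnorL k b * MilnorL k a = 0 := by
  have hE : ∀ c : kˣ, MilnorL k (-c) = MilnorL k (-1) + MilnorL k c := by
    intro c
    rw [← neg_one_mul c, milnorL_mul]
  have h3 := milnorL_mul_neg_self k (a * b)
  have h1 := milnorL_mul_neg_self k a
  have h2 := milnorL_mul_neg_self k b
  rw [hE] at h1 h2 h3
  rw [milnorL_mul] at h3
  simp only [mul_add, add_mul] at h1 h2 h3
  linear_combination (norm := abel) h3 - h1 - h2

lemma milnorL_sq (a : kˣ) :
    MilnorL k a * MilnorL k a = MilnorEps k * MilnorL k a := by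
  have h := milnorL_mul_neg_self k a
  rw [show (-a : kˣ) = (-1) * a from (neg_one_mul a).symm, milnorL_mul] at h
  simp only [mul_add] at h
  have h2 := milnorL_anticomm k a (-1)
  show _ = MilnorL k (-1) * MilnorL k a
  linear_combination (norm := abel) h - h2

lemma milnorSigma_l (a : kˣ) :
    MilnorSigma k (MilnorL k a) = - MilnorL k a := by
  have h : MilnorL k a =
      RingQuot.mkAlgHom ℤ (MilnorRel k) (TensorAlgebra.ι ℤ (Additive.ofMul a)) := by
    show RingQuot.mkRingHom (MilnorRel k) (TensorAlgebra.ι ℤ (Additive.ofMul a)) = _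
    rw [← RingQuot.mkAlgHom_coe ℤ (MilnorRel k)]
    rfl
  rw [h, MilnorSigma, RingQuot.liftAlgHom_mkAlgHom_apply, MilnorSigmaAux_ι]

lemma milnorL_commute (a : kˣ) (y : MilnorK k) :
    MilnorL k a * y = MilnorSigma k y * MilnorL k a := by
  obtain ⟨t, rfl⟩ := RingQuot.mkRingHom_surjective (MilnorRel k) y
  induction t using TensorAlgebra.induction with
  | algebraMap r =>
      rw [show (RingQuot.mkRingHom (MilnorRel k)) (algebraMap ℤ _ r)
          = ((r : ℤ) : MilnorK k) by rw [← map_intCast (RingQuot.mkRingHom (MilnorRel k)) r]; exact congrArg _ (eq_intCast _ r)]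
      rw [map_intCast (MilnorSigma k) r]
      exact (Int.cast_commute r (MilnorL k a)).symm.eq
  | ι x =>
      have hx : (RingQuot.mkRingHom (MilnorRel k)) (TensorAlgebra.ι ℤ x)
          = MilnorL k (Additive.toMul x) := rfl
      rw [hx, milnorSigma_l, neg_mul (MilnorL k (Additive.toMul x)) (MilnorL k a)]
      have := milnorL_anticomm k a (Additive.toMul x)
      linear_combination (norm := abel) this
  | mul p q hp hq =>
      rw [map_mul]
      rw [← mul_assoc, hp, mul_assoc, hq, ← mul_assoc, ← map_mul]
  | add p q hp hq =>
      rw [map_add, mul_add, hp, hq, map_add, add_mul]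

lemma milnorSigma_intCast (r : ℤ) :
    MilnorSigma k ((r : ℤ) : MilnorK k) = ((r : ℤ) : MilnorK k) :=
  map_intCast (MilnorSigma k) r

lemma T_mul (a : kˣ) (x y : MilnorK k × MilnorK k) :
    APiMul k (x.1 + x.2 * MilnorL k a, x.2) (y.1 + y.2 * MilnorL k a, y.2) =
      ((APiMul k x y).1 + (APiMul k x y).2 * MilnorL k a, (APiMul k x y).2) := by
  set c := MilnorL k a with hcdef
  have hc : ∀ z, c * z = MilnorSigma k z * c := milnorL_commute k a
  have hcc : c * c = MilnorEps k * c := milnorL_sq k a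
  have hsc : MilnorSigma k c = -c := milnorSigma_l k a
  simp only [APiMul, Prod.mk.injEq]
  constructor
  · have e1 : (x.1 + x.2*c) * (y.1 + y.2*c)
        = x.1*y.1 + x.1*(y.2*c) + x.2*(c*y.1) + x.2*(c*y.2*c) := by
      simp only [mul_add, add_mul, mul_assoc]; abel
    rw [e1, hc y.1, hc y.2]
    have e2 : x.2*(MilnorSigma k y.2 * c * c) = x.2*(MilnorSigma k y.2 * (c*c)) := by
      rw [mul_assoc]
    rw [e2, hcc]
    simp only [mul_add, add_mul, mul_assoc]
    abel
  · rw [map_add (MilnorSigma k), map_mul (MilnorSigma k), hsc]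
    have e3 : (x.1 + x.2*c) * y.2 = x.1*y.2 + x.2*(c*y.2) := by
      simp only [add_mul, mul_assoc]
    rw [e3, hc y.2]
    have e4 : x.2 * (MilnorSigma k y.1 + MilnorSigma k y.2 * -c)
        = x.2 * MilnorSigma k y.1 - x.2 * (MilnorSigma k y.2 * c) := by
      rw [mul_neg (MilnorSigma k y.2) c, mul_add, mul_neg]
      abel
    rw [e4]
    simp only [mul_add, add_mul, mul_assoc]
    abel

end MilnorLemmas

section DVRLemmas

variable (O : Type) [CommRing O] [IsDomain O] [IsDiscreteValuationRing O]
variable (F : Type) [Field F] [Algebra O F] [IsFractionRing O F]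

lemma exists_unitPiPow (π : O) (hπ : Irreducible π) (a : Fˣ) :
    ∃ (u : Oˣ) (i : ℤ), a = unitPiPow O F u π hπ i := by
  obtain ⟨x, y, hy, hxy⟩ := IsFractionRing.div_surjective (A := O) (a : F)
  have hy0 : y ≠ 0 := nonZeroDivisors.ne_zero hy
  have hx0 : x ≠ 0 := by
    intro h
    apply a.ne_zero
    rw [← hxy, h, map_zero, zero_div]
  obtain ⟨m, u1, hx⟩ := IsDiscreteValuationRing.eq_unit_mul_pow_irreducible hx0 hπ
  obtain ⟨n, u2, hyy⟩ := IsDiscreteValuationRing.eq_unit_mul_pow_irreducible hy0 hπ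
  refine ⟨u1 * u2⁻¹, (m : ℤ) - n, ?_⟩
  apply Units.ext
  have hπ0 : algebraMap O F π ≠ 0 := by
    simpa [map_eq_zero_iff (algebraMap O F) (IsFractionRing.injective O F)]
      using hπ.ne_zero
  have hu2 : algebraMap O F ((u2⁻¹ : Oˣ) : O) = (algebraMap O F ((u2 : Oˣ) : O))⁻¹ := by
    refine eq_inv_of_mul_eq_one_left ?_
    rw [← map_mul, Units.inv_mul, map_one]
  have hu20 : algebraMap O F ((u2 : Oˣ) : O) ≠ 0 := by
    simpa [map_eq_zero_iff (algebraMap O F) (IsFractionRing.injective O F)]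
      using u2.ne_zero
  show (a : F) = _
  rw [← hxy]
  simp only [unitPiPow, Units.val_mul, Units.val_zpow_eq_zpow_val, Units.coe_map,
    Units.val_mk0, RingHom.toMonoidHom_eq_coe, MonoidHom.coe_coe]
  rw [hx, hyy, map_mul, map_mul, map_pow, map_pow, map_mul, hu2,
    zpow_sub₀ hπ0, zpow_natCast, zpow_natCast]
  field_simp

lemma unitPiPow_switch (π π' : O) (hπ : Irreducible π) (hπ' : Irreducible π')
    (w : Oˣ) (hw : π' * (w : O) = π) (u : Oˣ) (i : ℤ) :
    unitPiPow O F u π hπ i = unitPiPow O F (u * w ^ i) π' hπ' i := by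
  have hmk : (Units.mk0 (algebraMap O F π)
        (by simpa [map_eq_zero_iff (algebraMap O F) (IsFractionRing.injective O F)]
          using hπ.ne_zero) : Fˣ)
      = Units.mk0 (algebraMap O F π')
        (by simpa [map_eq_zero_iff (algebraMap O F) (IsFractionRing.injective O F)]
          using hπ'.ne_zero) *
        Units.map (algebraMap O F).toMonoidHom w := by
    apply Units.ext
    simp only [Units.val_mul, Units.val_mk0, Units.coe_map,
      RingHom.toMonoidHom_eq_coe, MonoidHom.coe_coe]
    rw [← map_mul, hw]
  show _ * _ = _ * _
  rw [hmk, mul_zpow, map_mul, map_zpow]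
  rw [mul_comm ((Units.mk0 (algebraMap O F π') _ : Fˣ) ^ i), ← mul_assoc]

end DVRLemmas

section MainAux

variable (O : Type) [CommRing O] [IsDomain O] [IsDiscreteValuationRing O]
variable (F : Type) [Field F] [Algebra O F] [IsFractionRing O F]

lemma IsDpi.intCast {π : O} {hπ : Irreducible π}
    {d : MilnorK F → MilnorK (ResField O) × MilnorK (ResField O)}
    (hd : IsDpi O F π hπ d) (r : ℤ) :
    d ((r : ℤ) : MilnorK F) = (((r : ℤ) : MilnorK (ResField O)), 0) := by
  have hsm : ((r : ℤ) : MilnorK F) = r • (1 : MilnorK F) := by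
    rw [zsmul_eq_mul, mul_one]
  let D : MilnorK F →+ MilnorK (ResField O) × MilnorK (ResField O) :=
    AddMonoidHom.mk' d hd.map_add
  have : d ((r : ℤ) : MilnorK F) = D ((r : ℤ) : MilnorK F) := rfl
  rw [this, hsm, map_zsmul]
  show r • d 1 = _
  rw [hd.map_one, Prod.smul_mk, smul_zero, zsmul_eq_mul, mul_one]

end MainAux

/-- Independence of the boundary `∂_ν` from the choice of uniformizer: if `π`,
`π′` are two uniformizers and `∂_π`, `∂_{π′}` the associated boundary maps, then
the `Π`-components of `∂_π(x)` and `∂_{π′}(x)` agree for every `x ∈ K^M_*(F)`. -/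
theorem stmt_11 (O : Type) [CommRing O] [IsDomain O] [IsDiscreteValuationRing O]
    (F : Type) [Field F] [Algebra O F] [IsFractionRing O F]
    (π π' : O) (hπ : Irreducible π) (hπ' : Irreducible π')
    (d d' : MilnorK F → MilnorK (ResField O) × MilnorK (ResField O))
    (hd : IsDpi O F π hπ d) (hd' : IsDpi O F π' hπ' d') :
    ∀ x : MilnorK F, (d x).2 = (d' x).2 := by
  obtain ⟨w, hw⟩ := IsDiscreteValuationRing.associated_of_irreducible O hπ' hπ
  set c : MilnorK (ResField O) := MilnorL (ResField O) (resUnit O w) with hc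
  have key : ∀ z : MilnorK F, d' z = ((d z).1 + (d z).2 * c, (d z).2) := by
    intro z
    obtain ⟨t, rfl⟩ := RingQuot.mkRingHom_surjective (MilnorRel F) z
    induction t using TensorAlgebra.induction with
    | algebraMap r =>
        have h1 : (RingQuot.mkRingHom (MilnorRel F)) (algebraMap ℤ _ r)
            = ((r : ℤ) : MilnorK F) := by
          rw [← map_intCast (RingQuot.mkRingHom (MilnorRel F)) r]; exact congrArg _ (eq_intCast _ r)
        rw [h1, hd.intCast O F r, hd'.intCast O F r, zero_mul, add_zero]
    | ι x =>
        have h1 : (RingQuot.mkRingHom (MilnorRel F)) (TensorAlgebra.ι ℤ x)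
            = MilnorL F (Additive.toMul x) := rfl
        obtain ⟨u, i, ha⟩ := exists_unitPiPow O F π hπ (Additive.toMul x)
        have ha' : Additive.toMul x = unitPiPow O F (u * w ^ i) π' hπ' i := by
          rw [ha]; exact unitPiPow_switch O F π π' hπ hπ' w hw u i
        have hd1 : d (MilnorL F (Additive.toMul x))
            = (MilnorL (ResField O) (resUnit O u), (i : MilnorK (ResField O))) := by
          rw [ha]; exact hd.map_l u i
        have hd2 : d' (MilnorL F (Additive.toMul x))
            = (MilnorL (ResField O) (resUnit O (u * w ^ i)),
                (i : MilnorK (ResField O))) := by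
          rw [ha']; exact hd'.map_l (u * w ^ i) i
        rw [h1, hd1, hd2]
        have hres : resUnit O (u * w ^ i) = resUnit O u * (resUnit O w) ^ i := by
          simp only [resUnit, map_mul, map_zpow]
        rw [hres, milnorL_mul, milnorL_zpow]
        rw [Prod.mk.injEq]
        exact ⟨by rw [zsmul_eq_mul], rfl⟩
    | mul p q hp hq =>
        rw [map_mul, hd.map_mul, hd'.map_mul, hp, hq]
        exact T_mul (ResField O) (resUnit O w)
          ((RingQuot.mkRingHom (MilnorRel F)) p |> d)
          ((RingQuot.mkRingHom (MilnorRel F)) q |> d)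
    | add p q hp hq =>
        rw [map_add, hd.map_add, hd'.map_add, hp, hq]
        rw [Prod.mk.injEq]
        constructor
        · simp only [Prod.fst_add, Prod.snd_add, add_mul]
          abel
        · simp only [Prod.snd_add]
  intro x
  rw [key x]
end
end
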